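/- arXiv:1411.1385 — 2 statements merged into one kernel-verified Lean document; each statement's English description precedes it below -/
import Mathlib

section
/- Let M be an n×n non-negative matrix with leading eigenvalue λ > 0 and let w be a positive eigenvector of M^T for λ normalized so that Σ w_i = 1. Define x_0 = 0 and x_i = w_1 + ⋯ + w_i. Suppose M is an odd-block {0,1}-matrix with associated map φ, and in column j the 1-entries occupy rows min{φ(j-1),φ(j)}+1 through max{φ(j-1),φ(j)}. Then for each j, |x_{φ(j)} − x_{φ(j-1)}| = λ·(x_j − x_{j-1}). -/
lemma sum_cut_diff (n k m : ℕ) (hkm : k ≤ m) (w : Fin n → ℝ) :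
    (∑ i : Fin n, if (i : ℕ) < m then w i else 0)
      - (∑ i : Fin n, if (i : ℕ) < k then w i else 0)
    = ∑ i : Fin n, if k ≤ (i : ℕ) ∧ (i : ℕ) < m then w i else 0 := by
  rw [← Finset.sum_sub_distrib]
  refine Finset.sum_congr rfl fun i _ => ?_
  split_ifs <;> first | omega | ring

/-- Let `M` be an `n×n` non-negative matrix with leading eigenvalue
`lam > 0` and `w` a positive eigenvector of `Mᵀ` for `lam`, normalized with `Σ w_i = 1`.
Let `x_0 = 0`, `x_i = w_1 + ⋯ + w_i`. If `M` is an odd-block `{0,1}`-matrix with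
associated map `φ`, column `j` having 1-entries exactly in rows
`min{φ(j-1),φ(j)}+1, …, max{φ(j-1),φ(j)}`, then for each `j`,
`|x_{φ(j)} − x_{φ(j-1)}| = lam·(x_j − x_{j-1})`. -/
theorem interval_map_constant_slope
    (n : ℕ) (M : Matrix (Fin n) (Fin n) ℝ)
    (h01 : ∀ i j, M i j = 0 ∨ M i j = 1)
    (lam : ℝ) (hlam : 0 < lam)
    (w : Fin n → ℝ) (hw : ∀ i, 0 < w i)
    (heig : M.transpose.mulVec w = lam • w)
    (hnorm : ∑ i, w i = 1)
    (x : Fin (n + 1) → ℝ)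
    (hx : ∀ k : Fin (n + 1), x k = ∑ i : Fin n, if (i : ℕ) < (k : ℕ) then w i else 0)
    (φ : Fin (n + 1) → Fin (n + 1))
    -- column j has entries 1 exactly in rows min{φ(j-1),φ(j)}+1 through max{φ(j-1),φ(j)}
    (hcol : ∀ i j : Fin n, M i j = 1 ↔
      (min ((φ j.castSucc : Fin (n+1)) : ℕ) ((φ j.succ : Fin (n+1)) : ℕ) < (i : ℕ) + 1 ∧
       (i : ℕ) + 1 ≤ max ((φ j.castSucc : Fin (n+1)) : ℕ) ((φ j.succ : Fin (n+1)) : ℕ))) :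
    ∀ j : Fin n, |x (φ j.succ) - x (φ j.castSucc)| = lam * (x j.succ - x j.castSucc) := by
  intro j
  have hj := congrFun heig j
  simp only [Matrix.mulVec, Matrix.transpose_apply, Pi.smul_apply,
    dotProduct, smul_eq_mul] at hj
  set a := ((φ j.succ : Fin (n+1)) : ℕ) with ha
  set b := ((φ j.castSucc : Fin (n+1)) : ℕ) with hb
  -- LHS of eigen-equation equals sum over the interval
  have hsum : ∑ i : Fin n, M i j * w i
      = ∑ i : Fin n, if min b a ≤ (i : ℕ) ∧ (i : ℕ) < max b a then w i else 0 := by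
    refine Finset.sum_congr rfl fun i _ => ?_
    by_cases hc : min b a ≤ (i : ℕ) ∧ (i : ℕ) < max b a
    · have h1 : M i j = 1 := (hcol i j).mpr (by omega)
      rw [h1, if_pos hc, one_mul]
    · have h0 : M i j = 0 := by
        rcases h01 i j with h | h
        · exact h
        · exact absurd ((hcol i j).mp h) (by omega)
      rw [h0, if_neg hc, zero_mul]
  -- RHS: x j.succ - x j.castSucc = w j
  have hrhs : x j.succ - x j.castSucc = w j := by
    rw [hx j.succ, hx j.castSucc, Fin.val_succ, Fin.coe_castSucc,
      sum_cut_diff n (j : ℕ) ((j : ℕ) + 1) (by omega) w]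
    rw [show (fun i : Fin n => if (j : ℕ) ≤ (i : ℕ) ∧ (i : ℕ) < (j : ℕ) + 1 then w i else 0)
        = fun i : Fin n => if i = j then w i else 0 from ?_]
    · simp
    · funext i
      have : ((j : ℕ) ≤ (i : ℕ) ∧ (i : ℕ) < (j : ℕ) + 1) ↔ i = j := by
        constructor
        · intro h; exact Fin.ext (by omega)
        · intro h; subst h; omega
      exact if_congr this rfl rfl
  have hnn : (0 : ℝ) ≤ ∑ i : Fin n, if min b a ≤ (i : ℕ) ∧ (i : ℕ) < max b a then w i else 0 := by
    refine Finset.sum_nonneg fun i _ => ?_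
    split_ifs
    · exact (hw i).le
    · exact le_refl 0
  rcases le_total b a with hba | hab
  · have hd : x (φ j.succ) - x (φ j.castSucc)
        = ∑ i : Fin n, if min b a ≤ (i : ℕ) ∧ (i : ℕ) < max b a then w i else 0 := by
      rw [hx (φ j.succ), hx (φ j.castSucc), ← ha, ← hb, sum_cut_diff n b a hba w,
        min_eq_left hba, max_eq_right hba]
    rw [hd, abs_of_nonneg hnn, ← hsum, hj, hrhs]
  · have hd : x (φ j.castSucc) - x (φ j.succ)
        = ∑ i : Fin n, if min b a ≤ (i : ℕ) ∧ (i : ℕ) < max b a then w i else 0 := by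
      rw [hx (φ j.succ), hx (φ j.castSucc), ← ha, ← hb, sum_cut_diff n a b hab w,
        min_eq_right hab, max_eq_left hab]
    rw [abs_sub_comm, hd, abs_of_nonneg hnn, ← hsum, hj, hrhs]
end

section
/- Let h: [0,1] → [0,1] be piecewise linear with constant slope ±λ where λ > 1, with break points 0 = x_0 < ⋯ < x_n = 1 permuted by h. Suppose a cycle of the permutation φ (induced by h on the break points) contains no topological critical point of h. Then removing the points of that cycle from the partition yields a coarser partition on which h is still piecewise linear with slope ±λ, and the associated transition matrix is again a {0,1}-matrix with the same leading eigenvalue λ. -/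
private lemma image_Icc_pos {lam : ℝ} (hl : 0 < lam) {h : ℝ → ℝ} {p q : ℝ} (hpq : p ≤ q)
    (hs : ∀ u ∈ Set.Icc p q, ∀ v ∈ Set.Icc p q, h u - h v = lam * (u - v)) :
    h '' Set.Icc p q = Set.Icc (h p) (h q) := by
  have hpm : p ∈ Set.Icc p q := ⟨le_rfl, hpq⟩
  have hqm : q ∈ Set.Icc p q := ⟨hpq, le_rfl⟩
  ext t
  constructor
  · rintro ⟨u, hu, rfl⟩
    have h1 := hs u hu p hpm
    have h2 := hs u hu q hqm
    exact ⟨by nlinarith [hu.1], by nlinarith [hu.2]⟩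
  · intro ht
    have hd := hs q hqm p hpm
    have hm : p + (t - h p)/lam ∈ Set.Icc p q := by
      constructor
      · have : 0 ≤ (t - h p)/lam := div_nonneg (by linarith [ht.1]) hl.le
        linarith
      · have : (t - h p)/lam ≤ q - p := by
          rw [div_le_iff₀ hl]
          nlinarith [ht.2]
        linarith
    refine ⟨p + (t - h p)/lam, hm, ?_⟩
    have hv := hs _ hm p hpm
    have he : lam * (p + (t - h p)/lam - p) = t - h p := by
      field_simp
      ring
    linarith

private lemma image_Icc_neg {lam : ℝ} (hl : 0 < lam) {h : ℝ → ℝ} {p q : ℝ} (hpq : p ≤ q)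
    (hs : ∀ u ∈ Set.Icc p q, ∀ v ∈ Set.Icc p q, h u - h v = -(lam * (u - v))) :
    h '' Set.Icc p q = Set.Icc (h q) (h p) := by
  have hpm : p ∈ Set.Icc p q := ⟨le_rfl, hpq⟩
  have hqm : q ∈ Set.Icc p q := ⟨hpq, le_rfl⟩
  ext t
  constructor
  · rintro ⟨u, hu, rfl⟩
    have h1 := hs u hu p hpm
    have h2 := hs u hu q hqm
    exact ⟨by nlinarith [hu.2], by nlinarith [hu.1]⟩
  · intro ht
    have hd := hs q hqm p hpm
    have hm : p + (h p - t)/lam ∈ Set.Icc p q := by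
      constructor
      · have : 0 ≤ (h p - t)/lam := div_nonneg (by linarith [ht.2]) hl.le
        linarith
      · have : (h p - t)/lam ≤ q - p := by
          rw [div_le_iff₀ hl]
          nlinarith [ht.1]
        linarith
    refine ⟨p + (h p - t)/lam, hm, ?_⟩
    have hv := hs _ hm p hpm
    have he : lam * (p + (h p - t)/lam - p) = h p - t := by
      field_simp
      ring
    linarith

/-- Let `h : [0,1] → [0,1]` be piecewise linear with constant slope
`±lam`, `lam > 1`, relative to break points `0 = x_0 < ⋯ < x_n = 1` permuted by `h` via
`φ`. Suppose a cycle `C` of `φ` contains no topological critical point of `h` (every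
`x_i` with `i ∈ C` is interior and `h` is locally injective there). Then removing the
points of that cycle from the partition yields a coarser partition on which `h` is
still piecewise linear with slope `±lam`, and the associated transition matrix is again
a `{0,1}`-matrix with the same leading eigenvalue `lam` (having the vector of interval
lengths as positive left eigenvector). -/
theorem remove_noncritical_cycle
    (n : ℕ) (x : Fin (n + 1) → ℝ) (hmono : StrictMono x)
    (hx0 : x 0 = 0) (hxn : x (Fin.last n) = 1)
    (lam : ℝ) (hlam : 1 < lam)
    (h : ℝ → ℝ) (hmaps : Set.MapsTo h (Set.Icc (0:ℝ) 1) (Set.Icc (0:ℝ) 1))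
    -- h is piecewise linear with constant absolute slope lam on each partition interval
    (hpl : ∀ j : Fin n, (MonotoneOn h (Set.Icc (x j.castSucc) (x j.succ)) ∨
        AntitoneOn h (Set.Icc (x j.castSucc) (x j.succ))) ∧
      ∀ u ∈ Set.Icc (x j.castSucc) (x j.succ), ∀ v ∈ Set.Icc (x j.castSucc) (x j.succ),
        |h u - h v| = lam * |u - v|)
    (φ : Equiv.Perm (Fin (n + 1)))
    (hφ : ∀ i, h (x i) = x (φ i))
    -- C is a cycle of φ ...
    (C : Set (Fin (n + 1))) (hCne : C.Nonempty)
    (hCinv : ∀ i, i ∈ C ↔ φ i ∈ C)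
    (hCcyc : ∀ i ∈ C, ∀ j ∈ C, ∃ k : ℕ, (φ ^ k) i = j)
    -- ... containing no critical point of h: each of its points is interior and h is
    -- locally injective (hence monotone) on the two adjacent intervals together
    (hnoncrit : ∀ i ∈ C, ∃ hi0 : 0 < (i : ℕ), ∃ hin : (i : ℕ) < n,
      Set.InjOn h (Set.Icc (x ⟨(i : ℕ) - 1, by omega⟩) (x ⟨(i : ℕ) + 1, by omega⟩))) :
    ∃ (m : ℕ) (y : Fin (m + 1) → ℝ),
      StrictMono y ∧ y 0 = 0 ∧ y (Fin.last m) = 1 ∧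
      Set.range y = x '' {i | i ∉ C} ∧
      -- h is still piecewise linear with slope ±lam on the coarser partition
      (∀ j : Fin m, (MonotoneOn h (Set.Icc (y j.castSucc) (y j.succ)) ∨
          AntitoneOn h (Set.Icc (y j.castSucc) (y j.succ))) ∧
        ∀ u ∈ Set.Icc (y j.castSucc) (y j.succ), ∀ v ∈ Set.Icc (y j.castSucc) (y j.succ),
          |h u - h v| = lam * |u - v|) ∧
      -- the new transition matrix is a {0,1}-matrix with leading eigenvalue lam
      ∃ M' : Matrix (Fin m) (Fin m) ℝ,
        (∀ i j, M' i j = 0 ∨ M' i j = 1) ∧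
        (∀ i j, M' i j = 1 ↔
          Set.Icc (y i.castSucc) (y i.succ) ⊆ h '' Set.Icc (y j.castSucc) (y j.succ)) ∧
        M'.transpose.mulVec (fun j => y j.succ - y j.castSucc)
          = lam • fun j => y j.succ - y j.castSucc := by
  classical
  have hl0 : (0:ℝ) < lam := lt_trans one_pos hlam
  -- a clean reindexing of the partition points by naturals
  let X : ℕ → ℝ := fun k => x ⟨min k n, by omega⟩
  have hX : ∀ (k : ℕ) (hk : k < n + 1), X k = x ⟨k, hk⟩ := by
    intro k hk
    show x _ = x _
    congr 1
    exact Fin.ext (by simp; omega)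
  have hXmono : ∀ {j k : ℕ}, j ≤ k → X j ≤ X k := by
    intro j k hjk
    exact hmono.monotone (by simp [Fin.mk_le_mk]; omega)
  have hXlt : ∀ {j k : ℕ}, j < k → k ≤ n → X j < X k := by
    intro j k hjk hkn
    exact hmono (by simp [Fin.mk_lt_mk]; omega)
  -- on a single partition interval, h is affine with slope ±lam
  have base : ∀ p, p < n →
      (∀ u ∈ Set.Icc (X p) (X (p+1)), ∀ v ∈ Set.Icc (X p) (X (p+1)), h u - h v = lam * (u - v)) ∨
      (∀ u ∈ Set.Icc (X p) (X (p+1)), ∀ v ∈ Set.Icc (X p) (X (p+1)), h u - h v = -(lam * (u - v))) := by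
    intro p hp
    rw [hX p (by omega), hX (p+1) (by omega)]
    obtain ⟨hdir, habs⟩ := hpl ⟨p, hp⟩
    have hcs : (⟨p, hp⟩ : Fin n).castSucc = ⟨p, by omega⟩ := rfl
    have hsu : (⟨p, hp⟩ : Fin n).succ = ⟨p+1, by omega⟩ := rfl
    rw [hcs, hsu] at hdir habs
    rcases hdir with hm | hm
    · left
      intro u hu v hv
      have he := habs u hu v hv
      rcases le_total u v with hle | hle
      · have h1 : h u ≤ h v := hm hu hv hle
        rw [abs_of_nonpos (by linarith), abs_of_nonpos (by linarith)] at he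
        have : lam * -(u - v) = -(lam * (u - v)) := by ring
        linarith
      · have h1 : h v ≤ h u := hm hv hu hle
        rw [abs_of_nonneg (by linarith), abs_of_nonneg (by linarith)] at he
        exact he
    · right
      intro u hu v hv
      have he := habs u hu v hv
      rcases le_total u v with hle | hle
      · have h1 : h v ≤ h u := hm hu hv hle
        rw [abs_of_nonneg (by linarith), abs_of_nonpos (by linarith)] at he
        have : lam * -(u - v) = -(lam * (u - v)) := by ring
        linarith
      · have h1 : h u ≤ h v := hm hv hu hle
        rw [abs_of_nonpos (by linarith), abs_of_nonneg (by linarith)] at he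
        linarith
  -- key induction: h is affine with slope ±lam on any block of intervals whose
  -- interior break points all lie in C
  have key : ∀ (d p q : ℕ), p < q → q ≤ n → q = p + d + 1 →
      (∀ k, p < k → k < q → ∀ hk : k < n + 1, (⟨k, hk⟩ : Fin (n+1)) ∈ C) →
      ((∀ u ∈ Set.Icc (X p) (X q), ∀ v ∈ Set.Icc (X p) (X q), h u - h v = lam * (u - v)) ∨
       (∀ u ∈ Set.Icc (X p) (X q), ∀ v ∈ Set.Icc (X p) (X q), h u - h v = -(lam * (u - v)))) := by
    intro d
    induction d with
    | zero =>
      intro p q hpq hqn hd hC'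
      subst hd
      exact base p (by omega)
    | succ d ih =>
      intro p q hpq hqn hd hC'
      obtain ⟨r, rfl⟩ : ∃ r, q = r + 1 := ⟨q - 1, by omega⟩
      have hrp1 : r = p + d + 1 := by omega
      have hIH := ih p r (by omega) (by omega) (by omega)
        (fun k h1 h2 h3 => hC' k h1 (by omega) h3)
      have hB := base r (by omega)
      have hrC : (⟨r, by omega⟩ : Fin (n+1)) ∈ C := hC' r (by omega) (by omega) (by omega)
      obtain ⟨hi0, hin, hinj⟩ := hnoncrit _ hrC
      have hinj' : Set.InjOn h (Set.Icc (X (r-1)) (X (r+1))) := by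
        rw [hX (r-1) (by omega), hX (r+1) (by omega)]
        exact hinj
      have hXp_r : X p ≤ X r := hXmono (by omega)
      have hXr_q : X r ≤ X (r+1) := hXmono (by omega)
      have hrm : X (r-1) < X r := hXlt (by omega) (by omega)
      have hrp : X r < X (r+1) := hXlt (by omega) (by omega)
      have hXpr1 : X p ≤ X (r-1) := hXmono (by omega)
      set t := min (X r - X (r-1)) (X (r+1) - X r) with htdef
      have ht : 0 < t := lt_min (by linarith) (by linarith)
      have ht1 : t ≤ X r - X (r-1) := min_le_left _ _
      have ht2 : t ≤ X (r+1) - X r := min_le_right _ _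
      have hum : X r - t ∈ Set.Icc (X p) (X r) := ⟨by linarith, by linarith⟩
      have hvm : X r + t ∈ Set.Icc (X r) (X (r+1)) := ⟨by linarith, by linarith⟩
      have humI : X r - t ∈ Set.Icc (X (r-1)) (X (r+1)) := ⟨by linarith, by linarith⟩
      have hvmI : X r + t ∈ Set.Icc (X (r-1)) (X (r+1)) := ⟨by linarith, by linarith⟩
      have hrmem : X r ∈ Set.Icc (X p) (X r) := ⟨hXp_r, le_rfl⟩
      have hrmem' : X r ∈ Set.Icc (X r) (X (r+1)) := ⟨le_rfl, hXr_q⟩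
      rcases hIH with hL | hL <;> rcases hB with hR | hR
      · left
        have hval : ∀ w ∈ Set.Icc (X p) (X (r+1)), h w - h (X r) = lam * (w - X r) := by
          intro w hw
          rcases le_total w (X r) with hc | hc
          · exact hL w ⟨hw.1, hc⟩ (X r) hrmem
          · exact hR w ⟨hc, hw.2⟩ (X r) hrmem'
        intro u hu v hv
        have h1 := hval u hu
        have h2 := hval v hv
        have he : lam * (u - X r) - lam * (v - X r) = lam * (u - v) := by ring
        linarith
      · exfalso
        have h1 := hL (X r - t) hum (X r) hrmem
        have h2 := hR (X r + t) hvm (X r) hrmem'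
        have heq : h (X r - t) = h (X r + t) := by
          have e1 : lam * (X r - t - X r) = -(lam * t) := by ring
          have e2 : -(lam * (X r + t - X r)) = -(lam * t) := by ring
          linarith
        have := hinj' humI hvmI heq
        linarith
      · exfalso
        have h1 := hL (X r - t) hum (X r) hrmem
        have h2 := hR (X r + t) hvm (X r) hrmem'
        have heq : h (X r - t) = h (X r + t) := by
          have e1 : -(lam * (X r - t - X r)) = lam * t := by ring
          have e2 : lam * (X r + t - X r) = lam * t := by ring
          linarith
        have := hinj' humI hvmI heq
        linarith
      · right
        have hval : ∀ w ∈ Set.Icc (X p) (X (r+1)), h w - h (X r) = -(lam * (w - X r)) := by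
          intro w hw
          rcases le_total w (X r) with hc | hc
          · exact hL w ⟨hw.1, hc⟩ (X r) hrmem
          · exact hR w ⟨hc, hw.2⟩ (X r) hrmem'
        intro u hu v hv
        have h1 := hval u hu
        have h2 := hval v hv
        have he : -(lam * (u - X r)) - -(lam * (v - X r)) = -(lam * (u - v)) := by ring
        linarith
  -- the surviving break points
  let Sf : Finset (Fin (n+1)) := Finset.univ.filter (fun i => i ∉ C)
  have hmemSf : ∀ i : Fin (n+1), i ∈ Sf ↔ i ∉ C := by
    intro i
    show i ∈ Finset.univ.filter (fun i => i ∉ C) ↔ _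
    simp
  have h0S : (0 : Fin (n+1)) ∈ Sf := by
    rw [hmemSf]
    intro h0
    obtain ⟨hi0, -, -⟩ := hnoncrit 0 h0
    simp at hi0
  have hlastS : (Fin.last n : Fin (n+1)) ∈ Sf := by
    rw [hmemSf]
    intro h0
    obtain ⟨-, hin, -⟩ := hnoncrit _ h0
    simp at hin
  obtain ⟨m, hcard⟩ : ∃ m, Sf.card = m + 1 :=
    ⟨Sf.card - 1, by have : 0 < Sf.card := Finset.card_pos.mpr ⟨0, h0S⟩; omega⟩
  let e := Sf.orderIsoOfFin hcard
  let y : Fin (m+1) → ℝ := fun i => x ↑(e i)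
  have hy : StrictMono y := fun a b hab => hmono (Subtype.coe_lt_coe.mpr (e.strictMono hab))
  have he0 : (↑(e 0) : Fin (n+1)) = 0 := by
    have h1 : e 0 ≤ ⟨0, h0S⟩ := by
      have := e.monotone (Fin.zero_le (e.symm ⟨0, h0S⟩))
      rwa [OrderIso.apply_symm_apply] at this
    exact le_antisymm (Subtype.coe_le_coe.mpr h1) (Fin.zero_le _)
  have helast : (↑(e (Fin.last m)) : Fin (n+1)) = Fin.last n := by
    have h1 : (⟨Fin.last n, hlastS⟩ : {i // i ∈ Sf}) ≤ e (Fin.last m) := by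
      have := e.monotone (Fin.le_last (e.symm ⟨Fin.last n, hlastS⟩))
      rwa [OrderIso.apply_symm_apply] at this
    exact le_antisymm (Fin.le_last _) (Subtype.coe_le_coe.mpr h1)
  have hmem : ∀ i : Fin (n+1), i ∉ C → ∃ a : Fin (m+1), (↑(e a) : Fin (n+1)) = i := by
    intro i hi
    exact ⟨e.symm ⟨i, (hmemSf i).mpr hi⟩, by rw [OrderIso.apply_symm_apply]⟩
  have hnotC : ∀ a : Fin (m+1), (↑(e a) : Fin (n+1)) ∉ C := fun a => (hmemSf _).mp (e a).2
  -- h is affine with slope ±lam on each interval of the coarse partition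
  have merged : ∀ j : Fin m,
      (∀ u ∈ Set.Icc (y j.castSucc) (y j.succ), ∀ v ∈ Set.Icc (y j.castSucc) (y j.succ),
        h u - h v = lam * (u - v)) ∨
      (∀ u ∈ Set.Icc (y j.castSucc) (y j.succ), ∀ v ∈ Set.Icc (y j.castSucc) (y j.succ),
        h u - h v = -(lam * (u - v))) := by
    intro j
    have hABf : (↑(e j.castSucc) : Fin (n+1)) < ↑(e j.succ) :=
      Subtype.coe_lt_coe.mpr (e.strictMono (Fin.castSucc_lt_succ : j.castSucc < j.succ))
    have hABn : ((↑(e j.castSucc) : Fin (n+1)) : ℕ) < ((↑(e j.succ) : Fin (n+1)) : ℕ) := hABf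
    have hBn : ((↑(e j.succ) : Fin (n+1)) : ℕ) ≤ n := by
      have := (↑(e j.succ) : Fin (n+1)).isLt
      omega
    have hC' : ∀ k, ((↑(e j.castSucc) : Fin (n+1)) : ℕ) < k →
        k < ((↑(e j.succ) : Fin (n+1)) : ℕ) → ∀ hk : k < n + 1,
        (⟨k, hk⟩ : Fin (n+1)) ∈ C := by
      intro k h1 h2 hk
      by_contra hkC
      obtain ⟨i, hi⟩ := hmem ⟨k, hk⟩ hkC
      have l1 : j.castSucc < i := by
        apply e.lt_iff_lt.mp
        apply Subtype.coe_lt_coe.mp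
        show (↑(e j.castSucc) : Fin (n+1)) < ↑(e i)
        rw [hi]
        exact h1
      have l2 : i < j.succ := by
        apply e.lt_iff_lt.mp
        apply Subtype.coe_lt_coe.mp
        show (↑(e i) : Fin (n+1)) < ↑(e j.succ)
        rw [hi]
        exact h2
      have c1 : (j.castSucc : ℕ) < (i : ℕ) := l1
      have c2 : (i : ℕ) < (j.succ : ℕ) := l2
      have c3 : (j.succ : ℕ) = (j.castSucc : ℕ) + 1 := by simp
      omega
    have hk := key (((↑(e j.succ) : Fin (n+1)) : ℕ) - ((↑(e j.castSucc) : Fin (n+1)) : ℕ) - 1)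
      _ _ hABn hBn (by omega) hC'
    have e1 : X ((↑(e j.castSucc) : Fin (n+1)) : ℕ) = y j.castSucc := by
      rw [hX _ (↑(e j.castSucc) : Fin (n+1)).isLt]
    have e2 : X ((↑(e j.succ) : Fin (n+1)) : ℕ) = y j.succ := by
      rw [hX _ (↑(e j.succ) : Fin (n+1)).isLt]
    rw [e1, e2] at hk
    exact hk
  -- piecewise-linearity conclusion
  have hpl' : ∀ j : Fin m, (MonotoneOn h (Set.Icc (y j.castSucc) (y j.succ)) ∨
      AntitoneOn h (Set.Icc (y j.castSucc) (y j.succ))) ∧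
    ∀ u ∈ Set.Icc (y j.castSucc) (y j.succ), ∀ v ∈ Set.Icc (y j.castSucc) (y j.succ),
      |h u - h v| = lam * |u - v| := by
    intro j
    rcases merged j with hs | hs
    · refine ⟨Or.inl ?_, ?_⟩
      · intro u hu v hv huv
        have := hs u hu v hv
        nlinarith
      · intro u hu v hv
        rw [hs u hu v hv, abs_mul, abs_of_pos hl0]
    · refine ⟨Or.inr ?_, ?_⟩
      · intro u hu v hv huv
        have := hs v hv u hu
        nlinarith
      · intro u hu v hv
        rw [hs u hu v hv, abs_neg, abs_mul, abs_of_pos hl0]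
  -- images of coarse intervals
  have himgspec : ∀ j : Fin m, ∃ a b : Fin (m+1),
      h '' Set.Icc (y j.castSucc) (y j.succ) = Set.Icc (y a) (y b) ∧
      y b - y a = lam * (y j.succ - y j.castSucc) := by
    intro j
    have hle : y j.castSucc ≤ y j.succ := (hy (Fin.castSucc_lt_succ : j.castSucc < j.succ)).le
    obtain ⟨a0, ha0⟩ := hmem (φ ↑(e j.castSucc)) (fun hc => hnotC _ ((hCinv _).mpr hc))
    obtain ⟨b0, hb0⟩ := hmem (φ ↑(e j.succ)) (fun hc => hnotC _ ((hCinv _).mpr hc))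
    have hya : y a0 = h (y j.castSucc) := by
      show x ↑(e a0) = h (x ↑(e j.castSucc))
      rw [hφ, ha0]
    have hyb : y b0 = h (y j.succ) := by
      show x ↑(e b0) = h (x ↑(e j.succ))
      rw [hφ, hb0]
    have hmemc : y j.castSucc ∈ Set.Icc (y j.castSucc) (y j.succ) := ⟨le_rfl, hle⟩
    have hmems : y j.succ ∈ Set.Icc (y j.castSucc) (y j.succ) := ⟨hle, le_rfl⟩
    rcases merged j with hs | hs
    · refine ⟨a0, b0, ?_, ?_⟩
      · rw [image_Icc_pos hl0 hle hs, hya, hyb]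
      · have := hs (y j.succ) hmems (y j.castSucc) hmemc
        rw [hya, hyb]
        linarith
    · refine ⟨b0, a0, ?_, ?_⟩
      · rw [image_Icc_neg hl0 hle hs, hya, hyb]
      · have := hs (y j.succ) hmems (y j.castSucc) hmemc
        rw [hya, hyb]
        linarith
  refine ⟨m, y, hy, ?_, ?_, ?_, hpl', ?_⟩
  · show x ↑(e 0) = 0
    rw [he0, hx0]
  · show x ↑(e (Fin.last m)) = 1
    rw [helast, hxn]
  · ext t
    constructor
    · rintro ⟨i, rfl⟩
      exact ⟨↑(e i), hnotC i, rfl⟩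
    · rintro ⟨i, hi, rfl⟩
      obtain ⟨a, ha⟩ := hmem i hi
      exact ⟨a, by show x ↑(e a) = x i; rw [ha]⟩
  -- the transition matrix
  refine ⟨fun i j => if Set.Icc (y i.castSucc) (y i.succ) ⊆
      h '' Set.Icc (y j.castSucc) (y j.succ) then 1 else 0, ?_, ?_, ?_⟩
  · intro i j
    by_cases hc : Set.Icc (y i.castSucc) (y i.succ) ⊆ h '' Set.Icc (y j.castSucc) (y j.succ) <;>
      simp [hc]
  · intro i j
    by_cases hc : Set.Icc (y i.castSucc) (y i.succ) ⊆ h '' Set.Icc (y j.castSucc) (y j.succ) <;>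
      simp [hc]
  · funext j
    obtain ⟨a, b, himg, hlen⟩ := himgspec j
    have hposj : 0 < y j.succ - y j.castSucc := by
      have := hy (Fin.castSucc_lt_succ : j.castSucc < j.succ)
      linarith
    have hyab : y a < y b := by nlinarith
    have hab : a < b := hy.lt_iff_lt.mp hyab
    have habn : (a : ℕ) ≤ (b : ℕ) := le_of_lt hab
    have hbm : (b : ℕ) ≤ m := by have := b.isLt; omega
    let Y : ℕ → ℝ := fun k => y ⟨min k m, by omega⟩
    have hcond : ∀ i : Fin m, (Set.Icc (y i.castSucc) (y i.succ) ⊆ Set.Icc (y a) (y b)) ↔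
        ((a:ℕ) ≤ (i:ℕ) ∧ (i:ℕ) + 1 ≤ (b:ℕ)) := by
      intro i
      rw [Set.Icc_subset_Icc_iff (hy (Fin.castSucc_lt_succ : i.castSucc < i.succ)).le, hy.le_iff_le, hy.le_iff_le]
      constructor
      · rintro ⟨h1, h2⟩
        have c1 : (a : ℕ) ≤ (i.castSucc : ℕ) := h1
        have c2 : (i.succ : ℕ) ≤ (b : ℕ) := h2
        simp only [Fin.coe_castSucc, Fin.val_succ] at c1 c2
        exact ⟨c1, c2⟩
      · rintro ⟨h1, h2⟩
        constructor
        · show (a : ℕ) ≤ (i.castSucc : ℕ)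
          simp only [Fin.coe_castSucc]
          exact h1
        · show (i.succ : ℕ) ≤ (b : ℕ)
          simp only [Fin.val_succ]
          exact h2
    show (Matrix.transpose _).mulVec _ j = _
    simp only [Matrix.mulVec, Matrix.transpose_apply, dotProduct, Pi.smul_apply, smul_eq_mul]
    show ∑ i : Fin m, (if Set.Icc (y i.castSucc) (y i.succ) ⊆ h '' Set.Icc (y j.castSucc) (y j.succ)
      then (1:ℝ) else 0) * (y i.succ - y i.castSucc) = _
    simp only [himg]
    calc ∑ i : Fin m, (if Set.Icc (y i.castSucc) (y i.succ) ⊆ Set.Icc (y a) (y b)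
          then (1:ℝ) else 0) * (y i.succ - y i.castSucc)
        = ∑ i : Fin m, (fun k : ℕ => if (a:ℕ) ≤ k ∧ k + 1 ≤ (b:ℕ)
            then Y (k+1) - Y k else 0) (i:ℕ) := by
          apply Finset.sum_congr rfl
          intro i _
          by_cases hc : (a:ℕ) ≤ (i:ℕ) ∧ (i:ℕ) + 1 ≤ (b:ℕ)
          · rw [if_pos ((hcond i).mpr hc)]
            show (1:ℝ) * _ = if _ then _ else _
            rw [if_pos hc, one_mul]
            have hi1 : (i:ℕ) + 1 ≤ m := i.isLt
            have h1 : Y ((i:ℕ)+1) = y i.succ := by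
              show y _ = y i.succ
              congr 1
              exact Fin.ext (by simp [Fin.val_succ, min_eq_left hi1])
            have h2 : Y (i:ℕ) = y i.castSucc := by
              show y _ = y i.castSucc
              congr 1
              exact Fin.ext (by simp [min_eq_left (le_of_lt i.isLt)])
            rw [h1, h2]
          · rw [if_neg (fun hcc => hc ((hcond i).mp hcc))]
            show (0:ℝ) * _ = if _ then _ else _
            rw [if_neg hc, zero_mul]
      _ = ∑ k ∈ Finset.range m, (if (a:ℕ) ≤ k ∧ k + 1 ≤ (b:ℕ) then Y (k+1) - Y k else 0) :=
          Fin.sum_univ_eq_sum_range (fun k => if (a:ℕ) ≤ k ∧ k + 1 ≤ (b:ℕ) then Y (k+1) - Y k else 0) m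
      _ = ∑ k ∈ Finset.Ico (a:ℕ) (b:ℕ), (Y (k+1) - Y k) := by
          rw [← Finset.sum_filter]
          congr 1
          ext k
          simp only [Finset.mem_filter, Finset.mem_range, Finset.mem_Ico]
          omega
      _ = Y (b:ℕ) - Y (a:ℕ) := by
          rw [Finset.sum_Ico_eq_sub _ habn, Finset.sum_range_sub (fun k => Y k),
            Finset.sum_range_sub (fun k => Y k)]
          ring
      _ = y b - y a := by
          have h1 : Y (b:ℕ) = y b := by
            show y _ = y b
            congr 1
            exact Fin.ext (by simp [min_eq_left hbm])
          have h2 : Y (a:ℕ) = y a := by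
            show y _ = y a
            congr 1
            exact Fin.ext (by simp [min_eq_left (le_trans habn hbm)])
          rw [h1, h2]
      _ = lam * (y j.succ - y j.castSucc) := hlen
end
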